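/- Let G = (V1 ∪ V2, E) be a bipartite graph on n1 + n2 vertices and k ≥ 1. The k-tuple graph G^{kV1}, obtained by replacing each vertex of V1 with k copies having the same neighborhood, has spectrum {√k·λ : λ eigenvalue of G} ∪ {0 with multiplicity (k−1)·n1}; moreover, if G is connected with diameter D ≥ 2, then G^{kV1} has diameter D. -/

import Mathlib

open Matrix

/-- The bipartite graph on parts `A` and `B` determined by the relation `R`. -/
def bipGraph {A B : Type*} (R : A → B → Prop) : SimpleGraph (A ⊕ B) where
  Adj x y :=
    match x, y with
    | Sum.inl a, Sum.inr b => R a b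
    | Sum.inr b, Sum.inl a => R a b
    | _, _ => False
  symm := by constructor; rintro (a | b) (a' | b') h <;> simp_all
  loopless := by constructor; rintro (a | b) h <;> simp_all

/-- The `k`-tuple graph `G^{kV1}` of the bipartite graph determined by `R`:
every vertex of the part `A` is replaced by `k` copies with the same neighborhood. -/
def bipTupleGraph {A B : Type*} (R : A → B → Prop) (k : ℕ) :
    SimpleGraph ((A × Fin k) ⊕ B) where
  Adj x y :=
    match x, y with
    | Sum.inl a, Sum.inr b => R a.1 b
    | Sum.inr b, Sum.inl a => R a.1 b
    | _, _ => False
  symm := by constructor; rintro (a | b) (a' | b') h <;> simp_all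
  loopless := by constructor; rintro (a | b) h <;> simp_all

open Polynomial Kronecker
open scoped Classical

set_option linter.unusedSectionVars false

lemma evalCharpoly {n : Type*} [Fintype n] [DecidableEq n] (M : Matrix n n ℝ) (x : ℝ) :
    M.charpoly.eval x = (Matrix.diagonal (fun _ => x) - M).det := by
  have h : M.charpoly.eval x = ((charmatrix M).map (Polynomial.evalRingHom x)).det := by
    rw [Matrix.charpoly]
    exact (RingHom.map_det (Polynomial.evalRingHom x) (charmatrix M))
  rw [h]; congr 1; ext i j
  by_cases hij : i = j <;>
    simp [charmatrix_apply, hij, Matrix.diagonal, Matrix.sub_apply]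

lemma detHermitian {n : Type*} [Fintype n] [DecidableEq n] {M : Matrix n n ℝ}
    (hM : M.IsHermitian) (y : ℝ) :
    (Matrix.diagonal (fun _ => y) - M).det = ∏ i, (y - hM.eigenvalues i) := by
  set U : Matrix n n ℝ := (hM.eigenvectorUnitary : Matrix n n ℝ) with hU
  have hUU : U * star U = 1 :=
    (Matrix.mem_unitaryGroup_iff).mp hM.eigenvectorUnitary.2
  have hspec : M = U * Matrix.diagonal hM.eigenvalues * star U := by
    have := hM.spectral_theorem
    simpa [Function.comp] using this
  have key : Matrix.diagonal (fun _ => y) - M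
      = U * (Matrix.diagonal (fun _ => y) - Matrix.diagonal hM.eigenvalues) * star U := by
    rw [Matrix.mul_sub, Matrix.sub_mul]
    rw [← hspec]
    congr 1
    have h1 : Matrix.diagonal (fun _ : n => y) = y • (1 : Matrix n n ℝ) := by
      simp [Matrix.smul_one_eq_diagonal]
    rw [h1, Matrix.mul_smul, mul_one, Matrix.smul_mul, hUU]
  rw [key, Matrix.det_mul, Matrix.det_mul]
  have hdet : U.det * (star U).det = 1 := by
    rw [← Matrix.det_mul, hUU, Matrix.det_one]
  calc U.det * (Matrix.diagonal (fun _ => y) - Matrix.diagonal hM.eigenvalues).det * (star U).det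
      = (Matrix.diagonal (fun _ => y) - Matrix.diagonal hM.eigenvalues).det
          * (U.det * (star U).det) := by ring
    _ = (Matrix.diagonal (fun i => y - hM.eigenvalues i)).det := by
          rw [hdet, mul_one, Matrix.diagonal_sub]
    _ = ∏ i, (y - hM.eigenvalues i) := Matrix.det_diagonal

lemma rootsHermitian {n : Type*} [Fintype n] [DecidableEq n] {M : Matrix n n ℝ}
    (hM : M.IsHermitian) :
    M.charpoly.roots = Finset.univ.val.map hM.eigenvalues := by
  have hcp : M.charpoly = ∏ i, (X - C (hM.eigenvalues i)) := by
    apply Polynomial.funext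
    intro r
    rw [evalCharpoly, detHermitian hM, eval_prod]
    simp
  rw [hcp, Finset.prod_eq_multiset_prod]
  have h2 : Multiset.map (fun i => X - C (hM.eigenvalues i)) Finset.univ.val
      = Multiset.map (fun a => X - C a) (Multiset.map hM.eigenvalues Finset.univ.val) := by
    rw [Multiset.map_map]; rfl
  rw [h2, roots_multiset_prod_X_sub_C]


noncomputable section Aux13

variable {A B : Type*} [Fintype A] [Fintype B]

/-- the small invertible `Fin (k'+1)` block -/
def Qm (k' : ℕ) : Matrix (Fin (k'+1)) (Fin (k'+1)) ℝ :=
  fun i j => if j = 0 then 1 else if i = 0 then 1 else if i = j then -1 else 0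

def Qminv (k' : ℕ) : Matrix (Fin (k'+1)) (Fin (k'+1)) ℝ :=
  fun i j => if i = 0 then ((k' : ℝ)+1)⁻¹ else ((k' : ℝ)+1)⁻¹ - if i = j then 1 else 0

lemma k1_ne_zero (k' : ℕ) : ((k' : ℝ) + 1) ≠ 0 := by positivity

lemma Qm_mul_Qminv (k' : ℕ) : Qm k' * Qminv k' = 1 := by
  ext i l
  rw [Matrix.mul_apply, Fin.sum_univ_succ]
  induction i using Fin.cases with
  | zero =>
      induction l using Fin.cases with
      | zero =>
          simp [Qm, Qminv, Finset.sum_sub_distrib, Fin.succ_ne_zero]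
          field_simp
          ring
      | succ l' =>
          simp only [Qm, Qminv, Fin.succ_ne_zero, if_true, if_false, eq_self_iff_true,
            one_mul, Finset.sum_sub_distrib]
          simp [Fin.succ_ne_zero, (Fin.succ_ne_zero l').symm, Fin.succ_inj,
            Finset.sum_ite_eq', sub_eq_iff_eq_add, Matrix.one_apply,
            Finset.sum_sub_distrib]
          field_simp
          ring
  | succ i' =>
      induction l using Fin.cases with
      | zero =>
          simp [Qm, Qminv, Fin.succ_ne_zero, Finset.sum_ite_eq', Matrix.one_apply,
            (Fin.succ_ne_zero i').symm, Fin.succ_inj, mul_sub]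
      | succ l' =>
          simp only [Qm, Qminv, Fin.succ_ne_zero, if_false, eq_self_iff_true, if_true, one_mul]
          simp [Fin.succ_ne_zero, (Fin.succ_ne_zero i').symm, Fin.succ_inj, mul_sub,
            Finset.sum_sub_distrib, Finset.sum_ite_eq', Matrix.one_apply, ite_mul]
          by_cases h : i' = l' <;> simp [h]

end Aux13

noncomputable section Aux13b
variable {A B : Type*} [Fintype A] [Fintype B]

lemma Qm_colsum (k' : ℕ) (j : Fin (k'+1)) :
    ∑ i, Qm k' i j = if j = 0 then (k' : ℝ) + 1 else 0 := by
  rw [Fin.sum_univ_succ]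
  induction j using Fin.cases with
  | zero => simp [Qm]; ring
  | succ j' => simp [Qm, Fin.succ_ne_zero, (Fin.succ_ne_zero j').symm, Fin.succ_inj,
      Finset.sum_ite_eq', Finset.sum_ite_eq]

variable (R : A → B → Prop) (k' : ℕ)

/-- biadjacency matrix -/
def Nm : Matrix A B ℝ := fun a b => if R a b then 1 else 0

/-- the lifted biadjacency matrix -/
def Nm' : Matrix (A × Fin (k'+1)) B ℝ := fun ai b => if R ai.1 b then 1 else 0

/-- biadjacency matrix supported on the 0-th copies -/
def Nm₀ : Matrix (A × Fin (k'+1)) B ℝ := fun ai b => if ai.2 = 0 ∧ R ai.1 b then 1 else 0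

def Pm : Matrix ((A × Fin (k'+1)) ⊕ B) ((A × Fin (k'+1)) ⊕ B) ℝ :=
  fromBlocks ((1 : Matrix A A ℝ) ⊗ₖ Qm k') 0 0 1

def Pminv : Matrix ((A × Fin (k'+1)) ⊕ B) ((A × Fin (k'+1)) ⊕ B) ℝ :=
  fromBlocks ((1 : Matrix A A ℝ) ⊗ₖ Qminv k') 0 0 1

def Dm : Matrix ((A × Fin (k'+1)) ⊕ B) ((A × Fin (k'+1)) ⊕ B) ℝ :=
  fromBlocks 0 (Nm₀ R k') (((k' : ℝ) + 1) • (Nm₀ R k')ᵀ) 0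

lemma Pm_mul_Pminv : Pm (A := A) (B := B) k' * Pminv k' = 1 := by
  rw [Pm, Pminv, fromBlocks_multiply]
  simp [← mul_kronecker_mul, Qm_mul_Qminv, one_kronecker_one, fromBlocks_one]

lemma det_Pm_ne_zero : (Pm (A := A) (B := B) k').det ≠ 0 := by
  have h : (Pm (A := A) (B := B) k').det * (Pminv (A := A) (B := B) k').det = 1 := by
    rw [← Matrix.det_mul, Pm_mul_Pminv, Matrix.det_one]
  intro h0
  rw [h0, zero_mul] at h
  exact zero_ne_one h

lemma adjBig_eq : (bipTupleGraph R (k'+1)).adjMatrix ℝ =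
    fromBlocks 0 (Nm' R k') (Nm' R k')ᵀ 0 := by
  ext x y
  rcases x with ⟨a, i⟩ | b <;> rcases y with ⟨a', i'⟩ | b' <;>
    simp only [SimpleGraph.adjMatrix_apply] <;>
    simp [SimpleGraph.adjMatrix_apply, bipTupleGraph, Nm', fromBlocks] <;> congr

lemma kron_mul_N₀ : ((1 : Matrix A A ℝ) ⊗ₖ Qm k') * Nm₀ R k' = Nm' R k' := by
  ext ⟨a, i⟩ b
  rw [Matrix.mul_apply, Fintype.sum_prod_type]
  rw [Finset.sum_eq_single a]
  · by_cases hR : R a b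
    · simp [Nm₀, Nm', hR, kroneckerMap_apply, Matrix.one_apply, mul_ite, mul_one, mul_zero,
        Finset.sum_ite_eq', Qm]
    · simp [Nm₀, Nm', hR]
  · intro x _ hx
    simp [kroneckerMap_apply, Matrix.one_apply_ne (Ne.symm hx)]
  · simp

lemma Nt_mul_kron : (Nm' R k')ᵀ * ((1 : Matrix A A ℝ) ⊗ₖ Qm k')
    = ((k' : ℝ) + 1) • (Nm₀ R k')ᵀ := by
  ext b ⟨a, j⟩
  rw [Matrix.mul_apply, Fintype.sum_prod_type]
  rw [Finset.sum_eq_single a]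
  · by_cases hR : R a b
    · simp only [transpose_apply, Nm', Nm₀, hR, if_true, kroneckerMap_apply,
        Matrix.one_apply_eq, one_mul, Matrix.smul_apply, smul_eq_mul, and_true]
      rw [Qm_colsum]
      by_cases hj : j = 0 <;> simp [hj, mul_comm]
    · simp [Nm', Nm₀, hR]
  · intro x _ hx
    simp [kroneckerMap_apply, Matrix.one_apply_ne hx]
  · simp

lemma MP_eq_PD : (bipTupleGraph R (k'+1)).adjMatrix ℝ * Pm k' = Pm k' * Dm R k' := by
  rw [adjBig_eq, Pm, Dm, fromBlocks_multiply, fromBlocks_multiply]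
  simp [kron_mul_N₀, Nt_mul_kron]

end Aux13b

noncomputable section Aux13c
variable {A B : Type*} [Fintype A] [Fintype B] (R : A → B → Prop) (k' : ℕ)

/-- the reindexing equivalence -/
def eEquiv (A B : Type*) (k' : ℕ) : ((A ⊕ B) ⊕ (A × Fin k')) ≃ ((A × Fin (k'+1)) ⊕ B) where
  toFun x :=
    match x with
    | Sum.inl (Sum.inl a) => Sum.inl (a, 0)
    | Sum.inl (Sum.inr b) => Sum.inr b
    | Sum.inr (a, i) => Sum.inl (a, i.succ)
  invFun y :=
    match y with
    | Sum.inl (a, j) => Fin.cases (Sum.inl (Sum.inl a)) (fun i => Sum.inr (a, i)) j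
    | Sum.inr b => Sum.inl (Sum.inr b)
  left_inv := by rintro ((a | b) | ⟨a, i⟩) <;> simp
  right_inv := by
    rintro (⟨a, j⟩ | b)
    · induction j using Fin.cases <;> simp
    · simp

/-- the small twisted matrix -/
def M₂ : Matrix (A ⊕ B) (A ⊕ B) ℝ :=
  fromBlocks 0 (Nm R) (((k' : ℝ) + 1) • (Nm R)ᵀ) 0

lemma submatrix_eq (x : ℝ) :
    (Matrix.diagonal (fun _ => x) - Dm R k').submatrix (eEquiv A B k') (eEquiv A B k')
      = fromBlocks (Matrix.diagonal (fun _ => x) - M₂ R k') 0 0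
          (Matrix.diagonal (fun _ => x)) := by
  ext u v
  rcases u with (a | b) | ⟨a, i⟩ <;> rcases v with (a' | b') | ⟨a', i'⟩ <;>
    simp [eEquiv, Dm, M₂, Nm, Nm₀, fromBlocks, Matrix.diagonal, Matrix.sub_apply,
      Fin.succ_ne_zero, (Fin.succ_ne_zero _).symm, Fin.succ_inj, Prod.ext_iff]

lemma sqrtK_pos : 0 < Real.sqrt ((k' : ℝ) + 1) := Real.sqrt_pos.mpr (by positivity)

lemma det_step1 (x : ℝ) :
    (Matrix.diagonal (fun _ => x) - (bipTupleGraph R (k'+1)).adjMatrix ℝ).det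
      = (Matrix.diagonal (fun _ => x) - Dm R k').det := by
  have hcomm : (Matrix.diagonal (fun _ => x) - (bipTupleGraph R (k'+1)).adjMatrix ℝ) * Pm k'
      = Pm k' * (Matrix.diagonal (fun _ => x) - Dm R k') := by
    rw [← Matrix.smul_one_eq_diagonal, Matrix.sub_mul, Matrix.mul_sub, MP_eq_PD,
      Matrix.smul_mul, Matrix.mul_smul, Matrix.one_mul, Matrix.mul_one]
  have := congrArg Matrix.det hcomm
  rw [Matrix.det_mul, Matrix.det_mul] at this
  rw [mul_comm ((Pm (A := A) (B := B) k').det)] at this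
  exact mul_right_cancel₀ (det_Pm_ne_zero k') this

lemma det_step2 (x : ℝ) :
    (Matrix.diagonal (fun _ => x) - Dm R k').det
      = (Matrix.diagonal (fun _ => x) - M₂ R k').det * x ^ (k' * Fintype.card A) := by
  rw [← Matrix.det_submatrix_equiv_self (eEquiv A B k'), submatrix_eq,
    Matrix.det_fromBlocks_zero₂₁, Matrix.det_diagonal, Finset.prod_const, Finset.card_univ,
    Fintype.card_prod, Fintype.card_fin, mul_comm (Fintype.card A)]

/-- the diagonal conjugating matrix -/
def Em : Matrix (A ⊕ B) (A ⊕ B) ℝ :=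
  Matrix.diagonal (Sum.elim (fun _ : A => (1 : ℝ)) (fun _ : B => Real.sqrt ((k' : ℝ) + 1)))

def Eminv : Matrix (A ⊕ B) (A ⊕ B) ℝ :=
  Matrix.diagonal (Sum.elim (fun _ : A => (1 : ℝ)) (fun _ : B => (Real.sqrt ((k' : ℝ) + 1))⁻¹))

lemma adj_isHermitian {V : Type*} [Fintype V] (G : SimpleGraph V) [DecidableRel G.Adj] :
    (G.adjMatrix ℝ).IsHermitian := by
  ext i j
  simp [Matrix.conjTranspose_apply, SimpleGraph.adjMatrix_apply, SimpleGraph.adj_comm]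

lemma M₂_conj (x : ℝ) :
    Matrix.diagonal (fun _ => x) - M₂ R k'
      = Em (A := A) (B := B) k' *
          (Matrix.diagonal (fun _ => x) - Real.sqrt ((k' : ℝ) + 1) • (bipGraph R).adjMatrix ℝ) *
          Eminv k' := by
  have hs := (sqrtK_pos k').ne'
  have hk : Real.sqrt ((k' : ℝ) + 1) * Real.sqrt ((k' : ℝ) + 1) = (k' : ℝ) + 1 :=
    Real.mul_self_sqrt (by positivity)
  ext u v
  rw [Em, Eminv, Matrix.mul_diagonal, Matrix.diagonal_mul]
  rcases u with a | b <;> rcases v with a' | b' <;>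
    simp only [Sum.elim_inl, Sum.elim_inr, Matrix.sub_apply, Matrix.diagonal_apply,
      Matrix.smul_apply, smul_eq_mul, M₂, Nm, fromBlocks, Sum.elim_inl, Sum.elim_inr,
      SimpleGraph.adjMatrix_apply, one_mul, mul_one, Matrix.of_apply, Matrix.zero_apply,
      Matrix.transpose_apply] <;>
    [skip; skip; skip; skip]
  · have : (bipGraph R).Adj (Sum.inl a) (Sum.inl a') = False := by simp [bipGraph]
    simp [this]
  · have : (bipGraph R).Adj (Sum.inl a) (Sum.inr b') ↔ R a b' := Iff.rfl
    simp only [Sum.inl.injEq, reduceCtorEq, this]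
    by_cases hR : R a b' <;> simp [hR] <;> field_simp
  · have : (bipGraph R).Adj (Sum.inr b) (Sum.inl a') ↔ R a' b := Iff.rfl
    simp only [reduceCtorEq, this]
    by_cases hR : R a' b <;> simp [hR, Matrix.smul_apply]
    nlinarith [hk]
  · have : (bipGraph R).Adj (Sum.inr b) (Sum.inr b') = False := by simp [bipGraph]
    simp only [Sum.inr.injEq, this]
    by_cases hb : b = b' <;> simp [hb] <;> field_simp

lemma det_step3 (x : ℝ) :
    (Matrix.diagonal (fun _ => x) - M₂ R k').det
      = (Matrix.diagonal (fun _ => x)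
          - Real.sqrt ((k' : ℝ) + 1) • (bipGraph R).adjMatrix ℝ).det := by
  have hs := (sqrtK_pos (k' := k')).ne'
  have hEE : Em (A := A) (B := B) k' * Eminv k' = 1 := by
    rw [Em, Eminv, Matrix.diagonal_mul_diagonal]
    convert Matrix.diagonal_one
    rename_i u
    rcases u with a | b <;> simp [hs]
  have h1 : (Em (A := A) (B := B) k').det * (Eminv (A := A) (B := B) k').det = 1 := by
    rw [← Matrix.det_mul, hEE, Matrix.det_one]
  rw [M₂_conj, Matrix.det_mul, Matrix.det_mul]
  calc (Em (A := A) (B := B) k').det *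
        ((Matrix.diagonal (fun _ => x)
          - Real.sqrt ((k' : ℝ) + 1) • (bipGraph R).adjMatrix ℝ)).det * (Eminv k').det
      = ((Matrix.diagonal (fun _ => x)
          - Real.sqrt ((k' : ℝ) + 1) • (bipGraph R).adjMatrix ℝ)).det
        * ((Em (A := A) (B := B) k').det * (Eminv (A := A) (B := B) k').det) := by ring
    _ = _ := by rw [h1, mul_one]

lemma det_step4 (x : ℝ) :
    (Matrix.diagonal (fun _ => x)
        - Real.sqrt ((k' : ℝ) + 1) • (bipGraph R).adjMatrix ℝ).det
      = ∏ i, (x - Real.sqrt ((k' : ℝ) + 1) * (adj_isHermitian (bipGraph R)).eigenvalues i) := by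
  have hs := (sqrtK_pos (k' := k')).ne'
  set s := Real.sqrt ((k' : ℝ) + 1) with hsdef
  have key : Matrix.diagonal (fun _ : A ⊕ B => x) - s • (bipGraph R).adjMatrix ℝ
      = s • (Matrix.diagonal (fun _ => x / s) - (bipGraph R).adjMatrix ℝ) := by
    ext i j
    by_cases hij : i = j <;>
      simp [Matrix.sub_apply, Matrix.smul_apply, Matrix.diagonal_apply, hij, smul_eq_mul] <;>
      field_simp
  rw [key, Matrix.det_smul, detHermitian (adj_isHermitian (bipGraph R)), ← Finset.card_univ,
    ← Finset.prod_const, ← Finset.prod_mul_distrib]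
  refine Finset.prod_congr rfl fun i _ => ?_
  field_simp

end Aux13c

noncomputable section Aux13d
variable {A B : Type*} [Fintype A] [Fintype B] (R : A → B → Prop) (k' : ℕ)

lemma charpolyBig :
    ((bipTupleGraph R (k'+1)).adjMatrix ℝ).charpoly
      = (∏ i : A ⊕ B, (X - C (Real.sqrt ((k' : ℝ) + 1)
            * (adj_isHermitian (bipGraph R)).eigenvalues i)))
          * X ^ (k' * Fintype.card A) := by
  apply Polynomial.funext
  intro r
  rw [evalCharpoly, det_step1, det_step2, det_step3, det_step4]
  simp [eval_prod]

lemma rootsBig :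
    ((bipTupleGraph R (k'+1)).adjMatrix ℝ).charpoly.roots
      = Multiset.replicate (k' * Fintype.card A) 0
          + ((bipGraph R).adjMatrix ℝ).charpoly.roots.map
              (fun lam => Real.sqrt ((k' : ℝ) + 1) * lam) := by
  have hmon1 : (∏ i : A ⊕ B, (X - C (Real.sqrt ((k' : ℝ) + 1)
      * (adj_isHermitian (bipGraph R)).eigenvalues i))).Monic :=
    monic_prod_of_monic _ _ fun i _ => monic_X_sub_C _
  have hne : (∏ i : A ⊕ B, (X - C (Real.sqrt ((k' : ℝ) + 1)
      * (adj_isHermitian (bipGraph R)).eigenvalues i))) ≠ 0 := hmon1.ne_zero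
  have hne2 : (X : ℝ[X]) ^ (k' * Fintype.card A) ≠ 0 := pow_ne_zero _ X_ne_zero
  rw [charpolyBig, Polynomial.roots_mul (mul_ne_zero hne hne2), Polynomial.roots_pow,
    Polynomial.roots_X, Multiset.nsmul_singleton]
  rw [rootsHermitian (adj_isHermitian (bipGraph R))]
  rw [Finset.prod_eq_multiset_prod]
  have h2 : Multiset.map (fun i => X - C (Real.sqrt ((k' : ℝ) + 1)
        * (adj_isHermitian (bipGraph R)).eigenvalues i)) Finset.univ.val
      = Multiset.map (fun a => X - C a)
          (Multiset.map (fun i => Real.sqrt ((k' : ℝ) + 1)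
            * (adj_isHermitian (bipGraph R)).eigenvalues i) Finset.univ.val) := by
    rw [Multiset.map_map]; rfl
  rw [h2, roots_multiset_prod_X_sub_C, Multiset.map_map, add_comm]
  rfl

end Aux13d

section Aux13e
open SimpleGraph
variable {A B : Type*} {R : A → B → Prop} {k' : ℕ}

def collapse (k' : ℕ) : (A × Fin (k'+1)) ⊕ B → A ⊕ B := Sum.map Prod.fst id

def liftV (k' : ℕ) : A ⊕ B → (A × Fin (k'+1)) ⊕ B := Sum.map (fun a => (a, 0)) id

lemma collapse_liftV (u : A ⊕ B) : collapse k' (liftV k' u) = u := by rcases u <;> rfl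

lemma adj_collapse (x y : (A × Fin (k'+1)) ⊕ B) :
    (bipTupleGraph R (k'+1)).Adj x y ↔ (bipGraph R).Adj (collapse k' x) (collapse k' y) := by
  rcases x with ⟨a, i⟩ | b <;> rcases y with ⟨a', j⟩ | b' <;> exact Iff.rfl

/-- the collapsing graph homomorphism -/
def collapseHom (R : A → B → Prop) (k' : ℕ) : bipTupleGraph R (k'+1) →g bipGraph R :=
  ⟨collapse k', fun h => (adj_collapse _ _).mp h⟩

lemma edist_collapse (x y : (A × Fin (k'+1)) ⊕ B) :
    (bipGraph R).edist (collapse k' x) (collapse k' y)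
      ≤ (bipTupleGraph R (k'+1)).edist x y := by
  by_cases h : (bipTupleGraph R (k'+1)).edist x y = ⊤
  · exact h ▸ le_top
  · obtain ⟨w, hw⟩ := SimpleGraph.exists_walk_of_edist_ne_top h
    calc (bipGraph R).edist (collapse k' x) (collapse k' y)
        ≤ (w.map (collapseHom R k')).length := SimpleGraph.edist_le _
      _ = (w.length : ℕ∞) := by rw [SimpleGraph.Walk.length_map]
      _ = _ := hw

lemma lift_walk {u v : A ⊕ B} (w : (bipGraph R).Walk u v) :
    ∀ x y, collapse k' x = u → collapse k' y = v → w.length ≠ 0 →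
      ∃ w' : (bipTupleGraph R (k'+1)).Walk x y, w'.length = w.length := by
  induction w with
  | nil => intro x y hx hy h0; simp at h0
  | @cons u m v h p ih =>
    intro x y hx hy _
    by_cases hp : p.length = 0
    · have hmv : m = v := SimpleGraph.Walk.eq_of_length_eq_zero hp
      have hadj : (bipTupleGraph R (k'+1)).Adj x y := by
        rw [adj_collapse, hx, hy, ← hmv]; exact h
      exact ⟨SimpleGraph.Walk.cons hadj SimpleGraph.Walk.nil, by simp [hp]⟩
    · obtain ⟨w'', hl⟩ := ih (liftV k' m) y (collapse_liftV m) hy hp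
      have hadj : (bipTupleGraph R (k'+1)).Adj x (liftV k' m) := by
        rw [adj_collapse, hx, collapse_liftV]; exact h
      exact ⟨SimpleGraph.Walk.cons hadj w'', by simp [hl]⟩

lemma edist_lift (hconn : (bipGraph R).Connected) (x y : (A × Fin (k'+1)) ⊕ B)
    (hne : collapse k' x ≠ collapse k' y) :
    (bipTupleGraph R (k'+1)).edist x y
      ≤ (bipGraph R).edist (collapse k' x) (collapse k' y) := by
  obtain ⟨w, hw⟩ := (hconn (collapse k' x) (collapse k' y)).exists_walk_length_eq_edist
  have hw0 : w.length ≠ 0 := fun h0 => hne (SimpleGraph.Walk.eq_of_length_eq_zero h0)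
  obtain ⟨w', hl⟩ := lift_walk w x y rfl rfl hw0
  calc (bipTupleGraph R (k'+1)).edist x y ≤ (w'.length : ℕ∞) := SimpleGraph.edist_le _
    _ = (w.length : ℕ∞) := by rw [hl]
    _ = _ := hw

lemma exists_nbr (hconn : (bipGraph R).Connected) [Nontrivial (A ⊕ B)] (a : A) :
    ∃ b, R a b := by
  obtain ⟨v, hv⟩ := exists_ne (Sum.inl a : A ⊕ B)
  obtain ⟨w⟩ := hconn (Sum.inl a) v
  cases w with
  | nil => exact absurd rfl hv.symm
  | @cons _ m _ h p =>
    rcases m with a' | b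
    · exact absurd h (by simp [bipGraph])
    · exact ⟨b, h⟩

lemma ediam_tuple (hconn : (bipGraph R).Connected) (h2 : 2 ≤ (bipGraph R).ediam) :
    (bipTupleGraph R (k'+1)).ediam = (bipGraph R).ediam := by
  have hnt : Nontrivial (A ⊕ B) :=
    SimpleGraph.nontrivial_of_ediam_ne_zero (by intro h0; rw [h0] at h2; exact absurd h2 (by simp))
  apply le_antisymm
  · apply SimpleGraph.ediam_le_of_edist_le
    intro x y
    by_cases hc : collapse k' x = collapse k' y
    · by_cases hxy : x = y
      · subst hxy; simp
      · -- both in the inl part with same base vertex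
        rcases x with ⟨a, i⟩ | b <;> rcases y with ⟨a', j⟩ | b'
        · have ha : a = a' := by simpa [collapse] using hc
          subst ha
          obtain ⟨b, hb⟩ := exists_nbr hconn a
          have h1 : (bipTupleGraph R (k'+1)).Adj (Sum.inl (a, i)) (Sum.inr b) := hb
          have h2' : (bipTupleGraph R (k'+1)).Adj (Sum.inr b) (Sum.inl (a, j)) := hb
          have hw := SimpleGraph.edist_le
            (SimpleGraph.Walk.cons h1 (SimpleGraph.Walk.cons h2' SimpleGraph.Walk.nil))
          calc (bipTupleGraph R (k'+1)).edist (Sum.inl (a, i)) (Sum.inl (a, j)) ≤ 2 :=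
                le_trans hw (by simp)
            _ ≤ (bipGraph R).ediam := h2
        · exact absurd hc (by simp [collapse])
        · exact absurd hc (by simp [collapse])
        · exact absurd hc (by simpa [collapse] using hxy)
    · calc (bipTupleGraph R (k'+1)).edist x y
          ≤ (bipGraph R).edist (collapse k' x) (collapse k' y) := edist_lift hconn x y hc
        _ ≤ (bipGraph R).ediam := SimpleGraph.edist_le_ediam
  · rw [SimpleGraph.ediam]
    apply iSup₂_le
    intro u v
    calc (bipGraph R).edist u v
        = (bipGraph R).edist (collapse k' (liftV k' u)) (collapse k' (liftV k' v)) := by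
          rw [collapse_liftV, collapse_liftV]
      _ ≤ (bipTupleGraph R (k'+1)).edist (liftV k' u) (liftV k' v) := edist_collapse _ _
      _ ≤ (bipTupleGraph R (k'+1)).ediam := SimpleGraph.edist_le_ediam

end Aux13e

open scoped Classical in
/-- The `k`-tuple graph `G^{kV1}` of a bipartite graph `G` has spectrum
`{√k·λ : λ eigenvalue of G}` together with `0` with additional multiplicity `(k−1)·n1`;
moreover, if `G` is connected with diameter `D ≥ 2`, then `G^{kV1}` has diameter `D`. -/
theorem stmt_13 {A B : Type*} [Fintype A] [Fintype B] (R : A → B → Prop)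
    (k : ℕ) (hk : 1 ≤ k) :
    ((Matrix.charpoly ((bipTupleGraph R k).adjMatrix ℝ)).roots =
        Multiset.replicate ((k - 1) * Fintype.card A) 0 +
          (Matrix.charpoly ((bipGraph R).adjMatrix ℝ)).roots.map
            (fun lam => Real.sqrt k * lam)) ∧
      ∀ D : ℕ, 2 ≤ D → (bipGraph R).Connected → (bipGraph R).diam = D →
        (bipTupleGraph R k).diam = D := by
  obtain ⟨k', rfl⟩ : ∃ k'', k = k'' + 1 := ⟨k - 1, (Nat.succ_pred_eq_of_pos hk).symm⟩
  constructor
  · have h := rootsBig (R := R) (k' := k')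
    have hc : ((k' : ℝ) + 1) = ((k' + 1 : ℕ) : ℝ) := by push_cast; ring
    rw [hc] at h
    simpa [Nat.add_sub_cancel] using h
  · intro D hD hconn hdiam
    have hne0 : (bipGraph R).diam ≠ 0 := by rw [hdiam]; omega
    have hnetop := SimpleGraph.ediam_ne_top_of_diam_ne_zero hne0
    have hediam : (bipGraph R).ediam = (D : ℕ∞) := by
      rw [← hdiam, SimpleGraph.diam, ENat.coe_toNat hnetop]
    have h2 : (2 : ℕ∞) ≤ (bipGraph R).ediam := by
      rw [hediam]; exact_mod_cast hD
    rw [SimpleGraph.diam, ediam_tuple hconn h2, hediam, ENat.toNat_coe]
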